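/- For the distorted Freudenthal simplex σ_δ in ℝ^d with 0 < δ ≤ 1, the edge length between vertices v^i_δ and v^j_δ with i < j equals √((j-i)(d - (1-δ²)(j-i)))/√d. Consequently, the maximum edge length equals δ√d when 1/√2 ≤ δ ≤ 1, and √d/(2√(1-δ²)) when 0 < δ ≤ 1/√2 and d is even (more generally, the maximum of √(dx-(1-δ²)x²)/√d over integers 1 ≤ x ≤ d). -/

import Mathlib

open Finset

/-- Vertices of the diagonally distorted Freudenthal simplex:
`v^i_δ = T_δ(v^i)` where `v^i ∈ {0,1}^d` has its last `i` coordinates equal to `1`,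
i.e. `v^i_δ = (1/d)·(-i+iδ,…,-i+iδ, d-i+iδ,…,d-i+iδ)` with `d-i` copies of the first
value and `i` copies of the second. -/
noncomputable def vFT (d : ℕ) (δ : ℝ) (i : Fin (d + 1)) : EuclideanSpace ℝ (Fin d) :=
  WithLp.toLp 2 fun (k : Fin d) => (if d - (i : ℕ) ≤ (k : ℕ) then (1 : ℝ) else 0) - ((1 - δ) / d) * (i : ℕ)

/-- The point `C_δ = δ²·(1/2,…,1/2) + (1-δ²)·(1/(2d))·(-d+1, -d+3, …, d-3, d-1)`. -/
noncomputable def cFT (d : ℕ) (δ : ℝ) : EuclideanSpace ℝ (Fin d) :=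
  WithLp.toLp 2 fun (k : Fin d) => δ ^ 2 * (1 / 2) + (1 - δ ^ 2) * ((-(d : ℝ) + 1 + 2 * (k : ℕ)) / (2 * d))

lemma ind_sum (d n : ℕ) (hn : n ≤ d) :
    ∑ k : Fin d, (if d - n ≤ (k : ℕ) then (1 : ℝ) else 0) = n := by
  rw [Fin.sum_univ_eq_sum_range (fun k => if d - n ≤ k then (1 : ℝ) else 0)]
  rw [← Finset.sum_filter]
  have hfil : (Finset.range d).filter (fun k => d - n ≤ k) = Finset.Ico (d - n) d := by
    ext k
    simp [Finset.mem_filter, Finset.mem_range, Finset.mem_Ico, and_comm]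
  rw [hfil]
  simp only [Finset.sum_const, Nat.card_Ico, nsmul_eq_mul, mul_one]
  congr 1
  omega

lemma dist_vFT (d : ℕ) (hd : 0 < d) (δ : ℝ) (i j : Fin (d + 1)) (hij : i < j) :
    dist (vFT d δ i) (vFT d δ j) =
      Real.sqrt ((((j : ℕ) : ℝ) - ((i : ℕ) : ℝ)) *
        ((d : ℝ) - (1 - δ ^ 2) * (((j : ℕ) : ℝ) - ((i : ℕ) : ℝ)))) / Real.sqrt d := by
  have hi : (i : ℕ) ≤ d := Nat.lt_succ_iff.mp i.isLt
  have hj : (j : ℕ) ≤ d := Nat.lt_succ_iff.mp j.isLt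
  have hij' : (i : ℕ) < (j : ℕ) := hij
  have hd0 : (d : ℝ) ≠ 0 := Nat.cast_ne_zero.mpr hd.ne'
  set m : ℝ := ((j : ℕ) : ℝ) - ((i : ℕ) : ℝ) with hm
  have hm1 : (1 : ℝ) ≤ m := by
    have : ((i : ℕ) : ℝ) + 1 ≤ ((j : ℕ) : ℝ) := by exact_mod_cast hij'
    linarith
  have hmd : m ≤ (d : ℝ) := by
    have : ((j : ℕ) : ℝ) ≤ (d : ℝ) := by exact_mod_cast hj
    have : (0 : ℝ) ≤ ((i : ℕ) : ℝ) := Nat.cast_nonneg _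
    linarith [show ((j : ℕ) : ℝ) ≤ (d : ℝ) by exact_mod_cast hj]
  rw [EuclideanSpace.dist_eq]
  have hsum : ∑ k : Fin d, dist (vFT d δ i k) (vFT d δ j k) ^ 2
      = (m * ((d : ℝ) - (1 - δ ^ 2) * m)) / d := by
    have e : ∀ k : Fin d, dist (vFT d δ i k) (vFT d δ j k) ^ 2 =
        ((1 - δ) / d * m) ^ 2
        - (2 * ((1 - δ) / d * m) - 1) *
          ((if d - (j : ℕ) ≤ (k : ℕ) then (1 : ℝ) else 0)
            - (if d - (i : ℕ) ≤ (k : ℕ) then (1 : ℝ) else 0)) := by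
      intro k
      rw [Real.dist_eq, sq_abs]
      simp only [vFT, PiLp.toLp_apply]
      have hmono : d - (i : ℕ) ≤ (k : ℕ) → d - (j : ℕ) ≤ (k : ℕ) := fun h => by omega
      split_ifs with h1 h2 h2
      · rw [hm]; ring
      · exact absurd (hmono h1) h2
      · rw [hm]; ring
      · rw [hm]; ring
    rw [Finset.sum_congr rfl (fun k _ => e k)]
    rw [Finset.sum_sub_distrib, ← Finset.mul_sum,
      Finset.sum_sub_distrib, ind_sum d j hj, ind_sum d i hi, Finset.sum_const]
    simp only [Finset.card_univ, Fintype.card_fin, nsmul_eq_mul]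
    rw [← hm]
    field_simp
    ring
  have hA : (0 : ℝ) ≤ m := by linarith
  have hB : (0 : ℝ) ≤ (d : ℝ) - (1 - δ ^ 2) * m := by
    nlinarith [mul_nonneg (sq_nonneg δ) hA]
  rw [hsum, Real.sqrt_div (mul_nonneg hA hB)]

/-- the edge length between `v^i_δ` and `v^j_δ` (`i < j`) equals
`√((j-i)(d - (1-δ²)(j-i)))/√d`. Consequently the maximum edge length equals
`δ√d` when `1/√2 ≤ δ ≤ 1`, and in general equals the maximum of
`√(dx - (1-δ²)x²)/√d` over integers `1 ≤ x ≤ d`. -/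
theorem stmt_11 (d : ℕ) (hd : 0 < d) (δ : ℝ) (h0 : 0 < δ) (h1 : δ ≤ 1) :
    let S : Set ℝ :=
      {l | ∃ i j : Fin (d + 1), i < j ∧ l = dist (vFT d δ i) (vFT d δ j)}
    (∀ i j : Fin (d + 1), i < j →
        dist (vFT d δ i) (vFT d δ j) =
          Real.sqrt ((((j : ℕ) : ℝ) - ((i : ℕ) : ℝ)) *
            ((d : ℝ) - (1 - δ ^ 2) * (((j : ℕ) : ℝ) - ((i : ℕ) : ℝ)))) /
            Real.sqrt d) ∧
      (1 / Real.sqrt 2 ≤ δ → IsGreatest S (δ * Real.sqrt d)) ∧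
      IsGreatest S ((Finset.Icc 1 d).sup' (Finset.nonempty_Icc.2 hd)
        fun x : ℕ => Real.sqrt ((d : ℝ) * x - (1 - δ ^ 2) * (x : ℝ) ^ 2) /
          Real.sqrt d) := by
  intro S
  have hd0 : (0 : ℝ) < d := Nat.cast_pos.mpr hd
  have hsd : (0 : ℝ) < Real.sqrt d := Real.sqrt_pos.mpr hd0
  have hsq : Real.sqrt d * Real.sqrt d = d := Real.mul_self_sqrt hd0.le
  refine ⟨fun i j h => dist_vFT d hd δ i j h, ?_, ?_⟩
  · intro hδ
    have hδ2 : (1 : ℝ) / 2 ≤ δ ^ 2 := by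
      have h2 : Real.sqrt 2 * Real.sqrt 2 = 2 := Real.mul_self_sqrt (by norm_num)
      have h2p : (0 : ℝ) < Real.sqrt 2 := Real.sqrt_pos.mpr two_pos
      have h3 : (1 / Real.sqrt 2) * (1 / Real.sqrt 2) ≤ δ * δ :=
        mul_le_mul hδ hδ (by positivity) h0.le
      have h4 : (1 / Real.sqrt 2) * (1 / Real.sqrt 2) = 1 / 2 := by
        rw [div_mul_div_comm, h2]; norm_num
      nlinarith
    constructor
    · refine ⟨0, Fin.last d, ?_, ?_⟩
      · simp [Fin.lt_def, hd]
      · rw [dist_vFT d hd δ _ _ (by simp [Fin.lt_def, hd])]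
        simp only [Fin.val_last, Fin.val_zero, Nat.cast_zero, sub_zero]
        rw [show ((d:ℝ)) * ((d:ℝ) - (1 - δ ^ 2) * d) = (δ * d) ^ 2 by ring,
          Real.sqrt_sq (by positivity)]
        rw [eq_div_iff hsd.ne']
        nlinarith
    · rintro l ⟨i, j, hij, rfl⟩
      rw [dist_vFT d hd δ i j hij]
      set m : ℝ := ((j : ℕ) : ℝ) - ((i : ℕ) : ℝ) with hm
      have hij' : (i : ℕ) < (j : ℕ) := hij
      have hm1 : (1 : ℝ) ≤ m := by
        have : ((i : ℕ) : ℝ) + 1 ≤ ((j : ℕ) : ℝ) := by exact_mod_cast hij'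
        simp [hm]; linarith
      have hmd : m ≤ (d : ℝ) := by
        have h' : ((j : ℕ) : ℝ) ≤ (d : ℝ) := by
          exact_mod_cast Nat.lt_succ_iff.mp j.isLt
        have h'' : (0 : ℝ) ≤ ((i : ℕ) : ℝ) := Nat.cast_nonneg _
        simp [hm]; linarith
      have key : m * ((d : ℝ) - (1 - δ ^ 2) * m) ≤ (δ * d) ^ 2 := by
        nlinarith [mul_nonneg (sub_nonneg.2 hmd)
          (by nlinarith : (0:ℝ) ≤ (d : ℝ) - (1 - δ ^ 2) * ((d : ℝ) + m))]
      have : Real.sqrt (m * ((d : ℝ) - (1 - δ ^ 2) * m)) ≤ δ * d := by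
        rw [show δ * (d:ℝ) = Real.sqrt ((δ * d) ^ 2) from
          (Real.sqrt_sq (by positivity)).symm]
        exact Real.sqrt_le_sqrt key
      calc Real.sqrt (m * ((d : ℝ) - (1 - δ ^ 2) * m)) / Real.sqrt d
          ≤ (δ * d) / Real.sqrt d := by
            exact div_le_div_of_nonneg_right this hsd.le
        _ = δ * Real.sqrt d := by rw [div_eq_iff hsd.ne']; nlinarith
  · constructor
    · obtain ⟨x, hx, hsup⟩ := Finset.exists_mem_eq_sup' (Finset.nonempty_Icc.2 hd)
        (fun x : ℕ => Real.sqrt ((d : ℝ) * x - (1 - δ ^ 2) * (x : ℝ) ^ 2) / Real.sqrt d)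
      rw [Finset.mem_Icc] at hx
      refine ⟨0, ⟨x, by omega⟩, ?_, ?_⟩
      · simp [Fin.lt_def]; omega
      · rw [dist_vFT d hd δ _ _ (by simp [Fin.lt_def]; omega), hsup]
        simp only [Fin.val_zero, Nat.cast_zero, sub_zero]
        congr 2
        ring
    · rintro l ⟨i, j, hij, rfl⟩
      rw [dist_vFT d hd δ i j hij]
      have hij' : (i : ℕ) < (j : ℕ) := hij
      have hj : (j : ℕ) ≤ d := Nat.lt_succ_iff.mp j.isLt
      have hmem : (j : ℕ) - (i : ℕ) ∈ Finset.Icc 1 d := by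
        rw [Finset.mem_Icc]; omega
      have hcast : (((j : ℕ) - (i : ℕ) : ℕ) : ℝ) = ((j : ℕ) : ℝ) - ((i : ℕ) : ℝ) := by
        push_cast [Nat.cast_sub hij'.le]; ring
      calc Real.sqrt ((((j : ℕ) : ℝ) - ((i : ℕ) : ℝ)) *
            ((d : ℝ) - (1 - δ ^ 2) * (((j : ℕ) : ℝ) - ((i : ℕ) : ℝ)))) / Real.sqrt d
          = Real.sqrt ((d : ℝ) * (((j : ℕ) - (i : ℕ) : ℕ) : ℝ)
              - (1 - δ ^ 2) * (((j : ℕ) - (i : ℕ) : ℕ) : ℝ) ^ 2) / Real.sqrt d := by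
            rw [hcast]; congr 2; ring
        _ ≤ _ := Finset.le_sup'
            (fun x : ℕ => Real.sqrt ((d : ℝ) * x - (1 - δ ^ 2) * (x : ℝ) ^ 2) / Real.sqrt d)
            hmem
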